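/- Monotonicity of activation times and validity times: along any sequence of rewrite steps of the coordination semantics, the activation time of each node is strictly increasing (by its period p > 0 at each of its steps), and the validity time of each channel is nondecreasing; moreover the time-tags of successive elements appended to any given channel form a strictly increasing sequence (assuming the writing node writes at most one element per step). -/

import Mathlib

/-- A MIMOS channel: a finite sequence of time-tagged values (newest leftmost,
oldest rightmost) together with a validity time. -/
structure Channel (α : Type*) where
  elems : List (α × ℕ)   -- (value, time-tag), oldest element is the rightmost
  valid : ℕ              -- validity time of the channel

/-- Channel invariants: every element's time-tag is at most the validity time, and
elements are ordered by time-tags, oldest (smallest tag) rightmost. -/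
def ChannelInv {α : Type*} (c : Channel α) : Prop :=
  (∀ e ∈ c.elems, e.2 ≤ c.valid) ∧
  List.Pairwise (· ≥ ·) (c.elems.map Prod.snd)

/-- State of a node (activation time) together with one of its output channels. -/
structure NodeCh (α : Type*) where
  t : ℕ           -- next activation time of the node
  ch : Channel α  -- an output channel of the node

/-- One rewrite step (firing or idling) of a node with period `p`: the activation
time becomes `t + p`, the output channel's validity time becomes `t + 2p`, and if
the node fires and writes (`w = some v`) one element with tag `t + p` is appended. -/
def nodeStep {α : Type*} (p : ℕ) (w : Option α) (s : NodeCh α) : NodeCh α :=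
  ⟨s.t + p,
   ⟨(match w with
     | some v => (v, s.t + p) :: s.ch.elems
     | none => s.ch.elems), s.t + 2 * p⟩⟩

/-- monotonicity of activation times and validity times.  Along any
sequence of rewrite steps starting from a correctly initialized configuration
(empty channel with validity time equal to the first writing time `t₀ + p` of the
writer), the activation time of the node is strictly increasing (by its period
`p > 0` at each step), the validity time of the channel is nondecreasing, and the
time-tags of the successive elements appended to the channel are strictly
increasing (the tag list, newest first, is strictly decreasing left-to-right). -/
theorem monotonicity {α : Type*} (p : ℕ) (hp : 0 < p) (t₀ : ℕ)
    (w : ℕ → Option α)            -- what the node writes (if anything) at step n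
    (s : ℕ → NodeCh α)
    (hinit : s 0 = ⟨t₀, ⟨[], t₀ + p⟩⟩)
    (hstep : ∀ n, s (n + 1) = nodeStep p (w n) (s n)) :
    (∀ n, (s (n + 1)).t = (s n).t + p ∧ (s n).t < (s (n + 1)).t) ∧
    (∀ n, (s n).ch.valid ≤ (s (n + 1)).ch.valid) ∧
    (∀ n, List.Pairwise (· > ·) ((s n).ch.elems.map Prod.snd)) := by

  have ht : ∀ n, (s (n + 1)).t = (s n).t + p := by
    intro n; rw [hstep n]; rfl
  have htv : ∀ n, (s n).t = t₀ + n * p := by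
    intro n
    induction n with
    | zero => simp [hinit]
    | succ k ih => rw [ht k, ih]; ring
  have hvalid : ∀ n, (s n).ch.valid = t₀ + (n + 1) * p := by
    intro n
    cases n with
    | zero => simp [hinit]
    | succ k => rw [hstep k]; show (s k).t + 2 * p = _; rw [htv k]; ring
  have hinv : ∀ n, (∀ e ∈ (s n).ch.elems, e.2 ≤ (s n).t) ∧
      List.Pairwise (· > ·) ((s n).ch.elems.map Prod.snd) := by
    intro n
    induction n with
    | zero => simp [hinit]
    | succ k ih =>
      obtain ⟨hle, hsort⟩ := ih
      rw [hstep k]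
      cases w k with
      | none =>
        refine ⟨fun e he => ?_, hsort⟩
        exact le_trans (hle e he) (Nat.le_add_right _ _)
      | some v =>
        constructor
        · intro e he
          rcases List.mem_cons.mp he with rfl | he'
          · exact le_refl _
          · exact le_trans (hle e he') (Nat.le_add_right _ _)
        · refine List.pairwise_cons.mpr ⟨fun b hb => ?_, hsort⟩
          simp only [List.mem_map] at hb
          obtain ⟨e, he, rfl⟩ := hb
          exact lt_of_le_of_lt (hle e he) (Nat.lt_add_of_pos_right hp)
  refine ⟨fun n => ⟨ht n, ?_⟩, fun n => ?_, fun n => (hinv n).2⟩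
  · rw [ht n]; exact Nat.lt_add_of_pos_right hp
  · rw [hvalid n, hvalid (n + 1)]
    exact Nat.add_le_add_left (Nat.mul_le_mul_right p (by omega)) t₀
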